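/- Let C be a clutter with a perfect matching e_1,…,e_g of König type. If for any two edges f_1, f_2 of C and any edge e_i of the perfect matching one has f_1 ∩ e_i ⊆ f_2 ∩ e_i or f_2 ∩ e_i ⊆ f_1 ∩ e_i, then the independence complex Δ_C is pure shellable. -/

import Mathlib

variable {V : Type} [Fintype V] [DecidableEq V]

/-- A clutter: a family of finsets (edges), none of which contains another. -/
def IsClutter (E : Set (Finset V)) : Prop :=
  ∀ e ∈ E, ∀ f ∈ E, e ⊆ f → e = f

/-- A vertex cover: a set of vertices meeting every edge. -/
def IsVertexCover (E : Set (Finset V)) (C : Finset V) : Prop :=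
  ∀ e ∈ E, (e ∩ C).Nonempty

/-- A minimal vertex cover. -/
def IsMinimalVertexCover (E : Set (Finset V)) (C : Finset V) : Prop :=
  IsVertexCover E C ∧ ∀ D ⊂ C, ¬ IsVertexCover E D

/-- The covering number: minimum cardinality of a vertex cover. -/
noncomputable def coveringNumber (E : Set (Finset V)) : ℕ :=
  sInf {n : ℕ | ∃ C : Finset V, IsVertexCover E C ∧ C.card = n}

/-- Unmixed: all minimal vertex covers have the same cardinality. -/
def Unmixed (E : Set (Finset V)) : Prop :=
  ∀ C D : Finset V, IsMinimalVertexCover E C → IsMinimalVertexCover E D →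
    C.card = D.card

/-- A matching: a set of pairwise disjoint edges. -/
def IsMatching (E : Set (Finset V)) (M : Finset (Finset V)) : Prop :=
  ↑M ⊆ E ∧ (M : Set (Finset V)).Pairwise Disjoint

/-- The König property: the maximum size of a matching equals the covering number. -/
def HasKonigProperty (E : Set (Finset V)) : Prop :=
  (∃ M : Finset (Finset V), IsMatching E M ∧ M.card = coveringNumber E) ∧
  ∀ M : Finset (Finset V), IsMatching E M → M.card ≤ coveringNumber E

/-- A perfect matching of König type: pairwise disjoint edges `em 0, …, em (g-1)`
whose union is the whole vertex set, where `g` is the covering number. -/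
def IsPerfectMatchingKT (E : Set (Finset V)) {g : ℕ} (em : Fin g → Finset V) : Prop :=
  (∀ i, em i ∈ E) ∧ (∀ i j, i ≠ j → Disjoint (em i) (em j)) ∧
  (∀ x : V, ∃ i, x ∈ em i) ∧ g = coveringNumber E

/-- An independent set: contains no edge. -/
def IsIndependentSet (E : Set (Finset V)) (F : Finset V) : Prop :=
  ∀ e ∈ E, ¬ e ⊆ F

/-- A facet of the independence complex: a maximal independent set. -/
def IsFacet (E : Set (Finset V)) (F : Finset V) : Prop :=
  IsIndependentSet E F ∧ ∀ G : Finset V, IsIndependentSet E G → F ⊆ G → F = G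

/-- The set of facets of the independence complex of a clutter. -/
def cFacets (E : Set (Finset V)) : Set (Finset V) := {F | IsFacet E F}

/-- `F : Fin s → Finset V` is a shelling order of the family of facets `Fac`. -/
def IsShelling {s : ℕ} (Fac : Set (Finset V)) (F : Fin s → Finset V) : Prop :=
  Function.Injective F ∧ (∀ G : Finset V, G ∈ Fac ↔ ∃ i, F i = G) ∧
  ∀ i j : Fin s, i < j →
    ∃ v ∈ F j \ F i, ∃ l : Fin s, l < j ∧ F j \ F l = {v}

/-- A family of facets is shellable if it admits a shelling order. -/
def Shellable (Fac : Set (Finset V)) : Prop :=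
  ∃ (s : ℕ) (F : Fin s → Finset V), IsShelling Fac F

/-- A family of facets is pure if all its members have the same cardinality. -/
def PureFamily (Fac : Set (Finset V)) : Prop :=
  ∀ F ∈ Fac, ∀ G ∈ Fac, F.card = G.card

/-- Pure shellable: pure and shellable. -/
def PureShellable (Fac : Set (Finset V)) : Prop :=
  PureFamily Fac ∧ Shellable Fac

/-- A free vertex: a vertex belonging to exactly one edge. -/
def HasFreeVertex (E : Set (Finset V)) : Prop :=
  ∃ x : V, ∃ e ∈ E, x ∈ e ∧ ∀ f ∈ E, x ∈ f → f = e

/-- A cycle of length `r`: `r` distinct vertices and `r` distinct edges such that each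
of the vertices lies in exactly two of the edges and each of the edges contains exactly
two of the vertices. -/
def HasCycleOfLength (E : Set (Finset V)) (r : ℕ) : Prop :=
  ∃ (v : Fin r → V) (f : Fin r → Finset V),
    Function.Injective v ∧ Function.Injective f ∧ (∀ j, f j ∈ E) ∧
    (∀ i : Fin r, (Finset.univ.filter (fun j => v i ∈ f j)).card = 2) ∧
    (∀ j : Fin r, (Finset.univ.filter (fun i => v i ∈ f j)).card = 2)

section MRVAux

set_option linter.unusedSectionVars false

open Finset

variable (E : Set (Finset V))

/-- The finite set of edges. -/
private noncomputable def mrvEfin : Finset (Finset V) := (Set.toFinite E).toFinset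

private lemma mem_mrvEfin {f : Finset V} : f ∈ mrvEfin E ↔ f ∈ E :=
  Set.Finite.mem_toFinset _

/-- Degree of a vertex: number of edges containing it. -/
private noncomputable def mrvDeg (x : V) : ℕ :=
  ((mrvEfin E).filter (fun f => x ∈ f)).card

/-- A key on vertices: higher degree gives smaller key; injective. -/
private noncomputable def mrvKey (x : V) : ℕ :=
  ((mrvEfin E).card - mrvDeg E x) * Fintype.card V + (Fintype.equivFin V x : ℕ)

private lemma mrvDeg_le (x : V) : mrvDeg E x ≤ (mrvEfin E).card :=
  Finset.card_filter_le _ _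

private lemma mrvKey_lt_of_deg_lt {x y : V} (h : mrvDeg E x < mrvDeg E y) :
    mrvKey E y < mrvKey E x := by
  have hy := mrvDeg_le E y
  have hx := mrvDeg_le E x
  have hrx : (Fintype.equivFin V x : ℕ) < Fintype.card V := (Fintype.equivFin V x).isLt
  have hry : (Fintype.equivFin V y : ℕ) < Fintype.card V := (Fintype.equivFin V y).isLt
  have h2 : (mrvEfin E).card - mrvDeg E y + 1 ≤ (mrvEfin E).card - mrvDeg E x := by omega
  calc ((mrvEfin E).card - mrvDeg E y) * Fintype.card V + (Fintype.equivFin V y : ℕ)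
      < ((mrvEfin E).card - mrvDeg E y) * Fintype.card V + Fintype.card V := by omega
    _ = ((mrvEfin E).card - mrvDeg E y + 1) * Fintype.card V := by ring
    _ ≤ ((mrvEfin E).card - mrvDeg E x) * Fintype.card V := Nat.mul_le_mul_right _ h2
    _ ≤ mrvKey E x := Nat.le_add_right _ _

private lemma mrvDeg_le_of_key_lt {x y : V} (h : mrvKey E x < mrvKey E y) :
    mrvDeg E y ≤ mrvDeg E x := by
  by_contra hc
  push_neg at hc
  exact absurd h (Nat.lt_asymm (mrvKey_lt_of_deg_lt E hc))

private lemma mrvKey_injective : Function.Injective (mrvKey E) := by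
  intro x y h
  rcases lt_trichotomy (mrvDeg E x) (mrvDeg E y) with hd | hd | hd
  · exact absurd h.le (Nat.not_le.mpr (mrvKey_lt_of_deg_lt E hd))
  · have : (Fintype.equivFin V x : ℕ) = (Fintype.equivFin V y : ℕ) := by
      unfold mrvKey at h; rw [hd] at h; omega
    exact (Fintype.equivFin V).injective (Fin.ext this)
  · exact absurd h.ge (Nat.not_le.mpr (mrvKey_lt_of_deg_lt E hd))

variable {g : ℕ} (em : Fin g → Finset V)

private noncomputable instance mrvLexLinearOrder (g : ℕ) : LinearOrder (Lex (Fin g → ℕ)) :=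
  @Pi.Lex.linearOrder (Fin g) (fun _ => ℕ) _
    (Finite.to_wellFoundedLT) (fun _ => inferInstance)

/-- The chain condition
implies: within a matching edge, smaller key (= larger degree) vertices cover more. -/
private lemma mrvChain
    (hord : ∀ f₁ ∈ E, ∀ f₂ ∈ E, ∀ i : Fin g,
      f₁ ∩ em i ⊆ f₂ ∩ em i ∨ f₂ ∩ em i ⊆ f₁ ∩ em i)
    {i : Fin g} {x y : V} (hx : x ∈ em i) (hy : y ∈ em i)
    (hd : mrvDeg E y ≤ mrvDeg E x) : ∀ f ∈ E, y ∈ f → x ∈ f := by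
  by_contra hcon
  push_neg at hcon
  obtain ⟨f1, hf1E, hyf1, hxf1⟩ := hcon
  have hsub : (mrvEfin E).filter (fun f => x ∈ f) ⊆ (mrvEfin E).filter (fun f => y ∈ f) := by
    intro f2 hf2
    rw [mem_filter] at hf2 ⊢
    obtain ⟨hf2m, hxf2⟩ := hf2
    refine ⟨hf2m, ?_⟩
    rcases hord f2 (mem_mrvEfin E |>.mp hf2m) f1 hf1E i with hc | hc
    · exact absurd (mem_inter.mp (hc (mem_inter.mpr ⟨hxf2, hx⟩))).1 hxf1
    · exact (mem_inter.mp (hc (mem_inter.mpr ⟨hyf1, hy⟩))).1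
  have hss : (mrvEfin E).filter (fun f => x ∈ f) ⊂ (mrvEfin E).filter (fun f => y ∈ f) := by
    refine (Finset.ssubset_iff_of_subset hsub).mpr ⟨f1, ?_, ?_⟩
    · exact mem_filter.mpr ⟨(mem_mrvEfin E).mpr hf1E, hyf1⟩
    · intro hmem
      exact hxf1 (mem_filter.mp hmem).2
  have := Finset.card_lt_card hss
  unfold mrvDeg at hd
  omega

/-- Independent sets correspond to complements of vertex covers. -/
private lemma mrv_indep_iff_cover {F : Finset V} :
    IsIndependentSet E F ↔ IsVertexCover E Fᶜ := by
  constructor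
  · intro h e he
    obtain ⟨x, hx, hxF⟩ := Finset.not_subset.mp (h e he)
    exact ⟨x, mem_inter.mpr ⟨hx, mem_compl.mpr hxF⟩⟩
  · intro h e he hsub
    obtain ⟨x, hx⟩ := h e he
    rw [mem_inter, mem_compl] at hx
    exact hx.2 (hsub hx.1)

/-- A facet's complement is a minimal vertex cover. -/
private lemma mrv_facet_compl_mincover {F : Finset V} (hF : IsFacet E F) :
    IsMinimalVertexCover E Fᶜ := by
  obtain ⟨hind, hmax⟩ := hF
  refine ⟨(mrv_indep_iff_cover E).mp hind, ?_⟩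
  intro D hD hDc
  have hind' : IsIndependentSet E Dᶜ := by
    intro e he hsub
    obtain ⟨x, hx⟩ := hDc e he
    rw [mem_inter] at hx
    exact (mem_compl.mp (hsub hx.1)) hx.2
  have hFD : F ⊆ Dᶜ := by
    intro x hx
    rw [mem_compl]
    intro hxD
    exact (mem_compl.mp (hD.subset hxD)) hx
  have hFeq := hmax Dᶜ hind' hFD
  have : D = Fᶜ := by rw [hFeq, compl_compl]
  exact hD.ne this

/-- In a minimal cover, every vertex is the unique cover-vertex of some edge. -/
private lemma mrv_mincover_pick {C : Finset V} (hC : IsMinimalVertexCover E C)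
    {x : V} (hx : x ∈ C) : ∃ f ∈ E, f ∩ C = {x} := by
  obtain ⟨hcov, hmin⟩ := hC
  have hss : C.erase x ⊂ C := Finset.erase_ssubset hx
  have hnc := hmin _ hss
  unfold IsVertexCover at hnc
  push_neg at hnc
  obtain ⟨f, hfE, hf⟩ := hnc
  refine ⟨f, hfE, ?_⟩
  have hsub : f ∩ C ⊆ {x} := by
    intro a ha
    rw [mem_singleton]
    by_contra hax
    rw [mem_inter] at ha
    have : a ∈ f ∩ C.erase x := mem_inter.mpr ⟨ha.1, mem_erase.mpr ⟨hax, ha.2⟩⟩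
    rw [hf] at this
    exact absurd this (Finset.notMem_empty a)
  obtain ⟨b, hb⟩ := hcov f hfE
  have hbx : b = x := mem_singleton.mp (hsub hb)
  exact hsub.antisymm (singleton_subset_iff.mpr (hbx ▸ hb))

/-- A minimal cover meets each matching edge in exactly one vertex. -/
private lemma mrv_mincover_inter
    (hord : ∀ f₁ ∈ E, ∀ f₂ ∈ E, ∀ i : Fin g,
      f₁ ∩ em i ⊆ f₂ ∩ em i ∨ f₂ ∩ em i ⊆ f₁ ∩ em i)
    (hmE : ∀ i, em i ∈ E) {C : Finset V} (hC : IsMinimalVertexCover E C)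
    (i : Fin g) : ∃ x, x ∈ em i ∧ C ∩ em i = {x} := by
  obtain ⟨y, hy⟩ := hC.1 (em i) (hmE i)
  rw [mem_inter] at hy
  refine ⟨y, hy.1, ?_⟩
  apply Finset.Subset.antisymm
  · intro z hz
    rw [mem_singleton]
    by_contra hzy
    rw [mem_inter] at hz
    obtain ⟨fz, hfzE, hfz⟩ := mrv_mincover_pick E hC hz.1
    obtain ⟨fy, hfyE, hfy⟩ := mrv_mincover_pick E hC hy.2
    have hzfz : z ∈ fz := (mem_inter.mp (hfz ▸ mem_singleton_self z : z ∈ fz ∩ C)).1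
    have hyfy : y ∈ fy := (mem_inter.mp (hfy ▸ mem_singleton_self y : y ∈ fy ∩ C)).1
    rcases hord fz hfzE fy hfyE i with hc | hc
    · have : z ∈ fy := (mem_inter.mp (hc (mem_inter.mpr ⟨hzfz, hz.2⟩))).1
      have : z ∈ fy ∩ C := mem_inter.mpr ⟨this, hz.1⟩
      rw [hfy, mem_singleton] at this
      exact hzy this
    · have : y ∈ fz := (mem_inter.mp (hc (mem_inter.mpr ⟨hyfy, hy.1⟩))).1
      have : y ∈ fz ∩ C := mem_inter.mpr ⟨this, hy.2⟩
      rw [hfz, mem_singleton] at this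
      exact hzy this.symm
  · exact singleton_subset_iff.mpr (mem_inter.mpr ⟨hy.2, hy.1⟩)

/-- The image of a transversal meets each matching edge in exactly one vertex. -/
private lemma mrv_image_inter
    (hdisj : ∀ i j, i ≠ j → Disjoint (em i) (em j))
    {r : Fin g → V} (hr : ∀ b, r b ∈ em b) (i : Fin g) :
    (Finset.univ.image r) ∩ em i = {r i} := by
  apply Finset.Subset.antisymm
  · intro z hz
    rw [mem_inter] at hz
    obtain ⟨c, _, rfl⟩ := mem_image.mp hz.1
    rcases eq_or_ne c i with rfl | hne
    · exact mem_singleton_self _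
    · exact absurd hz.2 (Finset.disjoint_left.mp (hdisj c i hne) (hr c))
  · exact singleton_subset_iff.mpr
      (mem_inter.mpr ⟨mem_image.mpr ⟨i, mem_univ i, rfl⟩, hr i⟩)

/-- A transversal whose image is a cover gives a facet (its complement). -/
private lemma mrv_transversal_facet
    (hmE : ∀ i, em i ∈ E) (hdisj : ∀ i j, i ≠ j → Disjoint (em i) (em j))
    {p : Fin g → V} (hp : ∀ i, p i ∈ em i)
    (hcov : IsVertexCover E (Finset.univ.image p)) :
    IsFacet E (Finset.univ.image p)ᶜ := by
  constructor
  · intro e he hsub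
    obtain ⟨x, hx⟩ := hcov e he
    rw [mem_inter] at hx
    exact (mem_compl.mp (hsub hx.1)) hx.2
  · intro G hG hsubG
    have h1 : Gᶜ ⊆ Finset.univ.image p := by
      intro x hx
      by_contra hxC
      exact (mem_compl.mp hx) (hsubG (mem_compl.mpr hxC))
    have hGcov : IsVertexCover E Gᶜ := (mrv_indep_iff_cover E).mp hG
    have h2 : Finset.univ.image p ⊆ Gᶜ := by
      intro x hx
      obtain ⟨i, _, rfl⟩ := mem_image.mp hx
      obtain ⟨z, hz⟩ := hGcov (em i) (hmE i)
      rw [mem_inter] at hz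
      have hzim : z ∈ Finset.univ.image p := h1 hz.2
      have : z ∈ (Finset.univ.image p) ∩ em i := mem_inter.mpr ⟨hzim, hz.1⟩
      rw [mrv_image_inter em hdisj hp i, mem_singleton] at this
      exact this ▸ hz.2
    have hGC : Gᶜ = Finset.univ.image p := h1.antisymm h2
    rw [← hGC, compl_compl]

/-- Every facet arises from a transversal. -/
private lemma mrv_facet_picks
    (hord : ∀ f₁ ∈ E, ∀ f₂ ∈ E, ∀ i : Fin g,
      f₁ ∩ em i ⊆ f₂ ∩ em i ∨ f₂ ∩ em i ⊆ f₁ ∩ em i)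
    (hmE : ∀ i, em i ∈ E) (hcovV : ∀ x : V, ∃ i, x ∈ em i)
    {F : Finset V} (hF : IsFacet E F) :
    ∃ p : Fin g → V, (∀ i, p i ∈ em i) ∧ (∀ i, Fᶜ ∩ em i = {p i}) ∧
      Fᶜ = Finset.univ.image p := by
  have hmc := mrv_facet_compl_mincover E hF
  choose p hp1 hp2 using mrv_mincover_inter E em hord hmE hmc
  refine ⟨p, hp1, hp2, ?_⟩
  apply Finset.Subset.antisymm
  · intro x hx
    obtain ⟨i, hi⟩ := hcovV x
    have : x ∈ Fᶜ ∩ em i := mem_inter.mpr ⟨hx, hi⟩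
    rw [hp2 i, mem_singleton] at this
    exact mem_image.mpr ⟨i, mem_univ i, this.symm⟩
  · intro x hx
    obtain ⟨i, _, rfl⟩ := mem_image.mp hx
    have : p i ∈ Fᶜ ∩ em i := (hp2 i) ▸ mem_singleton_self _
    exact (mem_inter.mp this).1

/-- Key of a facet at coordinate `i`: key of the unique complement vertex in `em i`. -/
private noncomputable def mrvPickk (F : Finset V) (i : Fin g) : ℕ :=
  if h : (Fᶜ ∩ em i).Nonempty then mrvKey E h.choose else 0

private lemma mrvPickk_eq {F : Finset V} {x : V} {i : Fin g}
    (h : Fᶜ ∩ em i = {x}) : mrvPickk E em F i = mrvKey E x := by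
  have hne : (Fᶜ ∩ em i).Nonempty := by rw [h]; exact singleton_nonempty x
  rw [mrvPickk, dif_pos hne]
  congr 1
  have hall : ∀ w, w ∈ Fᶜ ∩ em i → w = x := fun w hw => mem_singleton.mp (h ▸ hw)
  exact hall _ hne.choose_spec

/-- Lexicographic key of a facet. -/
private noncomputable def mrvKfun (F : Finset V) : Lex (Fin g → ℕ) :=
  toLex (fun i => mrvPickk E em F i)

end MRVAux

/-- For a clutter with a perfect matching of König type, the ordering
condition on intersections with the matching edges implies that the independence
complex is pure shellable. -/
theorem ordering_implies_pure_shellable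
    (E : Set (Finset V)) (hclut : IsClutter E)
    {g : ℕ} (em : Fin g → Finset V) (hpm : IsPerfectMatchingKT E em)
    (hord : ∀ f₁ ∈ E, ∀ f₂ ∈ E, ∀ i : Fin g,
      f₁ ∩ em i ⊆ f₂ ∩ em i ∨ f₂ ∩ em i ⊆ f₁ ∩ em i) :
    PureShellable (cFacets E) := by
  classical
  obtain ⟨hmE, hdisj, hcovV, -⟩ := hpm
  have hfp := fun {F} (hF : IsFacet E F) => mrv_facet_picks E em hord hmE hcovV hF
  have hpure : PureFamily (cFacets E) := by
    have hcard : ∀ F ∈ cFacets E, F.card = Fintype.card V - g := by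
      intro F hF
      obtain ⟨p, hp1, hp2, hp3⟩ := hfp hF
      have hpinj : Function.Injective p := by
        intro i j h
        by_contra hne
        exact (Finset.disjoint_left.mp (hdisj i j hne) (hp1 i)) (h ▸ hp1 j)
      have h1 : Fᶜ.card = g := by
        rw [hp3, Finset.card_image_of_injective _ hpinj, Finset.card_univ, Fintype.card_fin]
      have h2 : Fᶜ.card = Fintype.card V - F.card := Finset.card_compl F
      have h3 : F.card ≤ Fintype.card V := Finset.card_le_univ F
      omega
    intro F hF G hG
    rw [hcard F hF, hcard G hG]
  refine ⟨hpure, ?_⟩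
  set FacFin : Finset (Finset V) := (Set.toFinite (cFacets E)).toFinset with hFacFin
  have hmemFac : ∀ {F : Finset V}, F ∈ FacFin ↔ IsFacet E F := fun {F} =>
    Set.Finite.mem_toFinset _
  set K : Finset (Lex (Fin g → ℕ)) := FacFin.image (mrvKfun E em) with hKdef
  set iso := K.orderIsoOfFin (rfl : K.card = K.card) with hiso
  have hFmH : ∀ i : Fin K.card,
      ∃ F ∈ FacFin, mrvKfun E em F = ((iso i : {x // x ∈ K}) : Lex (Fin g → ℕ)) := by
    intro i
    exact Finset.mem_image.mp (iso i).2
  choose Fm hFm1 hFm2 using hFmH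
  have hkfun : ∀ {F : Finset V} {p : Fin g → V},
      (∀ i, Fᶜ ∩ em i = {p i}) → mrvKfun E em F = toLex (fun i => mrvKey E (p i)) := by
    intro F p hp2
    exact congrArg toLex (funext fun i => mrvPickk_eq E em (hp2 i))
  have kinj : ∀ {F G : Finset V}, IsFacet E F → IsFacet E G →
      mrvKfun E em F = mrvKfun E em G → F = G := by
    intro F G hF hG h
    obtain ⟨p, hp1, hp2, hp3⟩ := hfp hF
    obtain ⟨q, hq1, hq2, hq3⟩ := hfp hG
    rw [hkfun hp2, hkfun hq2] at h
    have hpq : p = q := funext fun i =>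
      mrvKey_injective E (congrFun (toLex.injective h) i)
    have hcc : Fᶜ = Gᶜ := by rw [hp3, hq3, hpq]
    have hcc2 := congrArg (·ᶜ) hcc
    simpa using hcc2
  have hsurj : ∀ G : Finset V, G ∈ cFacets E ↔ ∃ i, Fm i = G := by
    intro G
    constructor
    · intro hG
      have hKG : mrvKfun E em G ∈ K := Finset.mem_image_of_mem _ (hmemFac.mpr hG)
      obtain ⟨i, hi⟩ := iso.surjective ⟨_, hKG⟩
      refine ⟨i, kinj (hmemFac.mp (hFm1 i)) hG ?_⟩
      rw [hFm2 i, hi]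
    · rintro ⟨i, rfl⟩
      exact hmemFac.mp (hFm1 i)
  refine ⟨K.card, Fm, ?_, hsurj, ?_⟩
  · intro i j h
    apply iso.injective
    apply Subtype.ext
    rw [← hFm2 i, ← hFm2 j, h]
  · intro i j hij
    have hFi : IsFacet E (Fm i) := hmemFac.mp (hFm1 i)
    have hFj : IsFacet E (Fm j) := hmemFac.mp (hFm1 j)
    obtain ⟨p, hp1, hp2, hp3⟩ := hfp hFi
    obtain ⟨q, hq1, hq2, hq3⟩ := hfp hFj
    have hlt : mrvKfun E em (Fm i) < mrvKfun E em (Fm j) := by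
      have h1 : iso i < iso j := iso.lt_iff_lt.mpr hij
      have h2 : ((iso i : {x // x ∈ K}) : Lex (Fin g → ℕ)) < (iso j : {x // x ∈ K}) :=
        Subtype.coe_lt_coe.mpr h1
      rw [← hFm2 i, ← hFm2 j] at h2
      exact h2
    rw [hkfun hp2, hkfun hq2] at hlt
    obtain ⟨a, ha1, ha2⟩ := hlt
    simp only [Pi.toLex_apply] at ha1 ha2
    have hpqa : p a ≠ q a := fun h => absurd ha2 (by rw [h]; exact lt_irrefl _)
    have hdeg : mrvDeg E (q a) ≤ mrvDeg E (p a) := mrvDeg_le_of_key_lt E ha2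
    have himp : ∀ f ∈ E, q a ∈ f → p a ∈ f := mrvChain E em hord (hp1 a) (hq1 a) hdeg
    have hvD : p a ∉ Finset.univ.image q := by
      intro hmem
      have hmm : p a ∈ (Finset.univ.image q) ∩ em a := Finset.mem_inter.mpr ⟨hmem, hp1 a⟩
      rw [mrv_image_inter em hdisj hq1 a, Finset.mem_singleton] at hmm
      exact hpqa hmm
    have hvFj : p a ∈ Fm j := by
      by_contra hc
      exact hvD (hq3 ▸ Finset.mem_compl.mpr hc)
    have hvFi : p a ∉ Fm i := by
      have hmm : p a ∈ (Fm i)ᶜ := hp3 ▸ Finset.mem_image.mpr ⟨a, Finset.mem_univ a, rfl⟩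
      exact Finset.mem_compl.mp hmm
    set r := Function.update q a (p a) with hrdef
    have hra : r a = p a := Function.update_self a (p a) q
    have hrb : ∀ b, b ≠ a → r b = q b := fun b hb => Function.update_of_ne hb _ _
    have hr1 : ∀ b, r b ∈ em b := by
      intro b
      rcases eq_or_ne b a with rfl | hne
      · rw [hra]; exact hp1 b
      · rw [hrb b hne]; exact hq1 b
    have hcov' : IsVertexCover E (Finset.univ.image r) := by
      intro f hf
      have hcovD : IsVertexCover E (Fm j)ᶜ := (mrv_indep_iff_cover E).mp hFj.1
      obtain ⟨z, hz⟩ := hcovD f hf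
      rw [Finset.mem_inter, hq3] at hz
      obtain ⟨b, -, rfl⟩ := Finset.mem_image.mp hz.2
      rcases eq_or_ne b a with rfl | hne
      · exact ⟨p b, Finset.mem_inter.mpr ⟨himp f hf hz.1,
          Finset.mem_image.mpr ⟨b, Finset.mem_univ b, hra⟩⟩⟩
      · exact ⟨q b, Finset.mem_inter.mpr ⟨hz.1,
          Finset.mem_image.mpr ⟨b, Finset.mem_univ b, hrb b hne⟩⟩⟩
    have hF' : IsFacet E (Finset.univ.image r)ᶜ :=
      mrv_transversal_facet E em hmE hdisj hr1 hcov'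
    obtain ⟨l, hl⟩ := (hsurj _).mp hF'
    have hl2 : ∀ b, (Fm l)ᶜ ∩ em b = {r b} := by
      intro b
      rw [hl, compl_compl]
      exact mrv_image_inter em hdisj hr1 b
    have hkl_lt : mrvKfun E em (Fm l) < mrvKfun E em (Fm j) := by
      rw [hkfun hl2, hkfun hq2]
      refine ⟨a, fun b hb => ?_, ?_⟩
      · show mrvKey E (r b) = mrvKey E (q b)
        rw [hrb b (ne_of_lt hb)]
      · show mrvKey E (r a) < mrvKey E (q a)
        rw [hra]
        exact ha2
    have hlj : l < j := by
      have hc : ((iso l : {x // x ∈ K}) : Lex (Fin g → ℕ)) < (iso j : {x // x ∈ K}) := by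
        rw [← hFm2 l, ← hFm2 j]
        exact hkl_lt
      exact iso.lt_iff_lt.mp (Subtype.coe_lt_coe.mp hc)
    refine ⟨p a, Finset.mem_sdiff.mpr ⟨hvFj, hvFi⟩, l, hlj, ?_⟩
    ext z
    simp only [Finset.mem_sdiff, Finset.mem_singleton]
    constructor
    · rintro ⟨hzj, hzl⟩
      have hz1 : z ∈ Finset.univ.image r := by
        by_contra hc
        exact hzl (hl ▸ Finset.mem_compl.mpr hc)
      obtain ⟨b, -, rfl⟩ := Finset.mem_image.mp hz1
      rcases eq_or_ne b a with rfl | hne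
      · exact hra
      · exfalso
        have hmm : q b ∈ (Fm j)ᶜ := hq3 ▸ Finset.mem_image.mpr ⟨b, Finset.mem_univ b, rfl⟩
        exact (Finset.mem_compl.mp hmm) (by rwa [hrb b hne] at hzj)
    · rintro rfl
      refine ⟨hvFj, ?_⟩
      rw [hl]
      intro hc
      exact (Finset.mem_compl.mp hc) (Finset.mem_image.mpr ⟨a, Finset.mem_univ a, hra⟩)
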